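/- Let τⁿ, τ ∈ D↑[0,T] with τⁿ → τ in the sense of pointwise convergence on a dense subset of [0,T] containing 0 and T, with sup_t Δτⁿ(t) → 0, and let φⁿ → φ uniformly on compacts, φ continuous. Define xⁿ = φⁿ ∘ τⁿ and the running infimum functions φ̲ⁿ(s) = inf_{r ∈ [τⁿ(0), τⁿ(0) ∨ s]} φⁿ(r) and φ̲(s) = inf_{r ∈ [τ(0), τ(0) ∨ s]} φ(r). Then sup_{t∈[0,T]} | inf_{s≤t} xⁿ(s) − φ̲ⁿ(τⁿ(t)) | → 0, φ̲ⁿ → φ̲ uniformly on compacts, and in particular the running infimum t ↦ inf_{s≤t} xⁿ(s) converges to φ̲ ∘ τ pointwise at every continuity point of τ and at t = T. -/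

import Mathlib

open Filter Set Topology

/-- Comparison of infima over approximating sets. -/
lemma aux_inf_le_inf_add (g : ℝ → ℝ) (K A B : Set ℝ) (hK : IsCompact K)
    (hg : ContinuousOn g K) (hA : A ⊆ K) (hB : B ⊆ K) (hBc : IsClosed B) (hBne : B.Nonempty)
    (δ ε : ℝ) (hmod : ∀ x ∈ K, ∀ y ∈ K, |x - y| ≤ δ → |g x - g y| ≤ ε)
    (happ : ∀ r ∈ B, ∃ x ∈ A, |x - r| ≤ δ) :
    sInf (g '' A) ≤ sInf (g '' B) + ε := by
  have hBcomp : IsCompact B := hK.of_isClosed_subset hBc hB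
  have himg : IsCompact (g '' B) := hBcomp.image_of_continuousOn (hg.mono hB)
  have hmem : sInf (g '' B) ∈ g '' B := himg.sInf_mem (hBne.image g)
  obtain ⟨r₀, hr₀B, hr₀⟩ := hmem
  obtain ⟨x, hxA, hxr⟩ := happ r₀ hr₀B
  have hbdd : BddBelow (g '' A) :=
    BddBelow.mono (image_mono hA) (hK.image_of_continuousOn hg).bddBelow
  have h1 : sInf (g '' A) ≤ g x := csInf_le hbdd ⟨x, hxA, rfl⟩
  have h2 : g x - g r₀ ≤ ε := by
    have := hmod x (hA hxA) r₀ (hB hr₀B) hxr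
    exact (abs_le.1 this).2
  rw [← hr₀]; linarith

lemma aux_inf_mono (g : ℝ → ℝ) (K A B : Set ℝ) (hK : IsCompact K)
    (hg : ContinuousOn g K) (hB : B ⊆ K) (hAB : A ⊆ B) (hAne : A.Nonempty) :
    sInf (g '' B) ≤ sInf (g '' A) := by
  have hbdd : BddBelow (g '' B) :=
    BddBelow.mono (image_mono hB) (hK.image_of_continuousOn hg).bddBelow
  exact csInf_le_csInf hbdd (hAne.image g) (image_mono hAB)

lemma aux_inf_fun_close (f g : ℝ → ℝ) (A : Set ℝ) (hAne : A.Nonempty)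
    (hbf : BddBelow (f '' A)) (hbg : BddBelow (g '' A)) (η : ℝ)
    (h : ∀ x ∈ A, |f x - g x| ≤ η) :
    |sInf (f '' A) - sInf (g '' A)| ≤ η := by
  have key : ∀ (f g : ℝ → ℝ), BddBelow (f '' A) → (∀ x ∈ A, |f x - g x| ≤ η) →
      sInf (f '' A) ≤ sInf (g '' A) + η := by
    intro f g hbf h
    have : ∀ b ∈ g '' A, sInf (f '' A) - η ≤ b := by
      rintro b ⟨x, hx, rfl⟩
      have h1 : sInf (f '' A) ≤ f x := csInf_le hbf ⟨x, hx, rfl⟩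
      have h2 := (abs_le.1 (h x hx)).2
      linarith
    have := le_csInf (hAne.image g) this
    linarith
  have h1 := key f g hbf h
  have h2 := key g f hbg (fun x hx => by rw [abs_sub_comm]; exact h x hx)
  rw [abs_le]; constructor <;> linarith

lemma aux_clamp (c d c' d' : ℝ) (hcd : c ≤ d) (δ : ℝ) (h1 : |c - c'| ≤ δ) (h2 : |d - d'| ≤ δ) :
    ∀ r ∈ Icc c' d', ∃ x ∈ Icc c d, |x - r| ≤ δ := by
  intro r hr
  refine ⟨max c (min r d), ⟨le_max_left _ _, max_le hcd (min_le_right _ _)⟩, ?_⟩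
  rcases le_or_gt r c with h | h
  · have : min r d = r := min_eq_left (h.trans hcd)
    rw [this, max_eq_left h]
    have := (abs_le.1 h1).2
    have : c - r ≤ δ := by
      have := hr.1
      linarith [(abs_le.1 h1).2]
    rwa [abs_of_nonneg (by linarith)]
  rcases le_or_gt r d with h' | h'
  · rw [min_eq_left h', max_eq_right h.le, sub_self, abs_zero]; exact (abs_nonneg _).trans h1
  · rw [min_eq_right h'.le, max_eq_right hcd]
    have : r - d ≤ δ := by
      have := hr.2
      linarith [(abs_le.1 h2).1]
    rw [abs_sub_comm, abs_of_nonneg (by linarith)]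
    exact this


/-- A right-continuous nondecreasing path with jumps at most `δ` comes within `δ`
of every value between `f 0` and `f t`. -/
lemma aux_reach (T : ℝ) (hT : 0 < T) (f : ℝ → ℝ) (hmono : MonotoneOn f (Icc 0 T))
    (hrc : ∀ u ∈ Ico (0:ℝ) T, ContinuousWithinAt f (Ici u) u)
    (δ : ℝ) (hδ : 0 ≤ δ) (hjump : ∀ u ∈ Ioc (0:ℝ) T, f u - Function.leftLim f u ≤ δ)
    (t : ℝ) (ht : t ∈ Icc 0 T) (r : ℝ) (hr : r ∈ Icc (f 0) (f t)) :
    ∃ s ∈ Icc 0 t, |f s - r| ≤ δ := by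
  classical
  set E : Set ℝ := {u | u ∈ Icc 0 t ∧ r ≤ f u} with hE
  have htE : t ∈ E := ⟨⟨ht.1, le_rfl⟩, hr.2⟩
  have hEne : E.Nonempty := ⟨t, htE⟩
  have hEbdd : BddBelow E := ⟨0, fun u hu => hu.1.1⟩
  set s₀ := sInf E with hs₀
  have hs₀0 : 0 ≤ s₀ := le_csInf hEne (fun u hu => hu.1.1)
  have hs₀t : s₀ ≤ t := csInf_le hEbdd htE
  have hs₀Icc : s₀ ∈ Icc 0 t := ⟨hs₀0, hs₀t⟩
  have hs₀IccT : s₀ ∈ Icc 0 T := ⟨hs₀0, hs₀t.trans ht.2⟩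
  -- members of Icc 0 t are in Icc 0 T
  have hsub : Icc 0 t ⊆ Icc (0:ℝ) T := Icc_subset_Icc le_rfl ht.2
  -- Claim 1 : r ≤ f s₀
  have hge : r ≤ f s₀ := by
    rcases eq_or_lt_of_le hs₀t with heq | hlt
    · rw [heq]; exact hr.2
    · -- right continuity
      have hs₀T : s₀ ∈ Ico (0:ℝ) T := ⟨hs₀0, hlt.trans_le ht.2⟩
      have htd : Tendsto f (𝓝[>] s₀) (𝓝 (f s₀)) :=
        (hrc s₀ hs₀T).mono_left (nhdsWithin_mono _ Ioi_subset_Ici_self)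
      have hev : ∀ᶠ v in 𝓝[>] s₀, r ≤ f v := by
        filter_upwards [Ioc_mem_nhdsGT_of_mem ⟨le_rfl, hlt⟩] with v hv
        obtain ⟨u, huE, huv⟩ := exists_lt_of_csInf_lt hEne (hv.1 : s₀ < v)
        exact le_trans huE.2 (hmono (hsub huE.1) (hsub ⟨huE.1.1.trans huv.le, hv.2⟩)
          huv.le)
      exact ge_of_tendsto htd hev
  -- Claim 2 : f s₀ ≤ r + δ
  have hle : f s₀ ≤ r + δ := by
    rcases eq_or_lt_of_le hs₀0 with heq | hpos
    · rw [← heq]; linarith [hr.1]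
    · -- s₀ > 0 : use the left limit and the jump bound
      have hjmp := hjump s₀ ⟨hpos, hs₀t.trans ht.2⟩
      -- the globally monotone extension
      set g : ℝ → ℝ := fun x => f (max 0 (min x T)) with hg
      have hgmono : Monotone g := by
        intro x y hxy
        exact hmono ⟨le_max_left _ _, max_le hT.le (min_le_right _ _)⟩
          ⟨le_max_left _ _, max_le hT.le (min_le_right _ _)⟩
          (max_le_max le_rfl (min_le_min hxy le_rfl))
      have hfg : f =ᶠ[𝓝[<] s₀] g := by
        filter_upwards [Ioo_mem_nhdsLT_of_mem (⟨hpos, le_rfl⟩ : s₀ ∈ Ioc 0 s₀)] with x hx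
        have hx0 : 0 ≤ x := hx.1.le
        have hxT : x ≤ T := (hx.2.trans_le hs₀t).le.trans ht.2
        simp [hg, max_eq_right, min_eq_left hxT, max_eq_right hx0]
      have htd : Tendsto g (𝓝[<] s₀) (𝓝 (Function.leftLim g s₀)) :=
        hgmono.tendsto_leftLim s₀
      have htd' : Tendsto f (𝓝[<] s₀) (𝓝 (Function.leftLim g s₀)) :=
        htd.congr' hfg.symm
      have hLL : Function.leftLim f s₀ = Function.leftLim g s₀ :=
        leftLim_eq_of_tendsto htd'
      have hLLle : Function.leftLim g s₀ ≤ r := by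
        apply le_of_tendsto htd'
        filter_upwards [Ioo_mem_nhdsLT_of_mem (⟨hpos, le_rfl⟩ : s₀ ∈ Ioc 0 s₀)] with u hu
        by_contra hru
        push_neg at hru
        have huE : u ∈ E := ⟨⟨hu.1.le, (hu.2.trans_le hs₀t).le⟩, hru.le⟩
        exact absurd (csInf_le hEbdd huE) (not_le.2 hu.2)
      rw [hLL] at hjmp
      linarith
  exact ⟨s₀, hs₀Icc, by rw [abs_of_nonneg (by linarith)]; linarith⟩


theorem stmt2
    (T : ℝ) (hT : 0 < T)
    (τn : ℕ → ℝ → ℝ) (τ : ℝ → ℝ)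
    (hτn_mono : ∀ n, MonotoneOn (τn n) (Icc 0 T))
    (hτn_nonneg : ∀ n, ∀ t ∈ Icc (0:ℝ) T, 0 ≤ τn n t)
    (hτn_rc : ∀ n, ∀ t ∈ Ico (0:ℝ) T, ContinuousWithinAt (τn n) (Ici t) t)
    (hτ_mono : MonotoneOn τ (Icc 0 T))
    (hτ_nonneg : ∀ t ∈ Icc (0:ℝ) T, 0 ≤ τ t)
    (hτ_rc : ∀ t ∈ Ico (0:ℝ) T, ContinuousWithinAt τ (Ici t) t)
    (S : Set ℝ) (hS_sub : S ⊆ Icc 0 T) (hS_dense : Icc (0:ℝ) T ⊆ closure S)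
    (hS0 : (0:ℝ) ∈ S) (hST : T ∈ S)
    (hconv : ∀ t ∈ S, Tendsto (fun n => τn n t) atTop (nhds (τ t)))
    (hjump : ∀ ε > (0:ℝ), ∀ᶠ n in atTop, ∀ t ∈ Ioc (0:ℝ) T,
      τn n t - Function.leftLim (τn n) t ≤ ε)
    (φn : ℕ → ℝ → ℝ) (φ : ℝ → ℝ)
    (hφn_cont : ∀ n, Continuous (φn n)) (hφ_cont : Continuous φ)
    (hφ_unif : ∀ Kc : Set ℝ, IsCompact Kc → TendstoUniformlyOn φn φ atTop Kc) :
    (∀ ε > (0:ℝ), ∀ᶠ n in atTop, ∀ t ∈ Icc (0:ℝ) T,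
      |sInf ((fun s => φn n (τn n s)) '' Icc 0 t)
        - sInf (φn n '' Icc (τn n 0) (max (τn n 0) (τn n t)))| < ε) ∧
    (∀ Kc : Set ℝ, IsCompact Kc →
      TendstoUniformlyOn (fun n s => sInf (φn n '' Icc (τn n 0) (max (τn n 0) s)))
        (fun s => sInf (φ '' Icc (τ 0) (max (τ 0) s))) atTop Kc) ∧
    (∀ t ∈ Icc (0:ℝ) T, (ContinuousWithinAt τ (Icc 0 T) t ∨ t = T) →
      Tendsto (fun n => sInf ((fun s => φn n (τn n s)) '' Icc 0 t)) atTop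
        (nhds (sInf (φ '' Icc (τ 0) (max (τ 0) (τ t)))))) := by
  have h0T : (0:ℝ) ∈ Icc 0 T := ⟨le_rfl, hT.le⟩
  have hTT : T ∈ Icc (0:ℝ) T := ⟨hT.le, le_rfl⟩
  have ha : Tendsto (fun n => τn n 0) atTop (𝓝 (τ 0)) := hconv 0 hS0
  have hb : Tendsto (fun n => τn n T) atTop (𝓝 (τ T)) := hconv T hST
  have ha0 : 0 ≤ τ 0 := hτ_nonneg 0 h0T
  -- Part 1
  have P1 : ∀ ε > (0:ℝ), ∀ᶠ n in atTop, ∀ t ∈ Icc (0:ℝ) T,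
      |sInf ((fun s => φn n (τn n s)) '' Icc 0 t)
        - sInf (φn n '' Icc (τn n 0) (max (τn n 0) (τn n t)))| < ε := by
    intro ε hε
    set K : Set ℝ := Icc 0 (τ T + 1) with hK
    have hKcomp : IsCompact K := isCompact_Icc
    obtain ⟨δ, hδ, hmod0⟩ := Metric.uniformContinuousOn_iff.1
      (hKcomp.uniformContinuousOn_of_continuous hφ_cont.continuousOn) (ε/4) (by positivity)
    have hmodφ : ∀ x ∈ K, ∀ y ∈ K, |x - y| ≤ δ/2 → |φ x - φ y| ≤ ε/4 := by
      intro x hx y hy hxy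
      have := hmod0 x hx y hy (by rw [Real.dist_eq]; linarith)
      rw [Real.dist_eq] at this; exact this.le
    have hE1 : ∀ᶠ n in atTop, τn n T ≤ τ T + 1 :=
      hb.eventually (eventually_le_nhds (lt_add_one (τ T)))
    have hE2 := hjump (δ/2) (by positivity)
    have hE3 := Metric.tendstoUniformlyOn_iff.1 (hφ_unif K hKcomp) (ε/4) (by positivity)
    filter_upwards [hE1, hE2, hE3] with n h1 h2 h3
    intro t htIcc
    have hsub : Icc (0:ℝ) t ⊆ Icc 0 T := Icc_subset_Icc le_rfl htIcc.2
    have hc0 : 0 ≤ τn n 0 := hτn_nonneg n 0 h0T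
    have hcd : τn n 0 ≤ τn n t := hτn_mono n h0T htIcc htIcc.1
    have hdT : τn n t ≤ τ T + 1 := le_trans (hτn_mono n htIcc hTT htIcc.2) h1
    have hBK : Icc (τn n 0) (τn n t) ⊆ K := fun r hr => ⟨hc0.trans hr.1, hr.2.trans hdT⟩
    have hAsub : (τn n '' Icc 0 t) ⊆ Icc (τn n 0) (τn n t) := by
      rintro _ ⟨s, hs, rfl⟩
      exact ⟨hτn_mono n h0T (hsub hs) hs.1, hτn_mono n (hsub hs) htIcc hs.2⟩
    have hmodn : ∀ x ∈ K, ∀ y ∈ K, |x - y| ≤ δ/2 → |φn n x - φn n y| ≤ 3*ε/4 := by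
      intro x hx y hy hxy
      have e1 := h3 x hx; have e2 := h3 y hy
      rw [Real.dist_eq] at e1 e2
      have e3 := hmodφ x hx y hy hxy
      have : φn n x - φn n y = -(φ x - φn n x) + (φ x - φ y) + (φ y - φn n y) := by ring
      rw [this]
      refine (abs_add_three _ _ _).trans ?_
      rw [abs_neg]
      linarith [le_of_lt e1, le_of_lt e2]
    have happ : ∀ r ∈ Icc (τn n 0) (τn n t), ∃ x ∈ (τn n '' Icc 0 t), |x - r| ≤ δ/2 := by
      intro r hr
      obtain ⟨s, hs, hsr⟩ := aux_reach T hT (τn n) (hτn_mono n) (hτn_rc n) (δ/2)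
        (by positivity) h2 t htIcc r hr
      exact ⟨τn n s, mem_image_of_mem _ hs, hsr⟩
    have key1 := aux_inf_le_inf_add (φn n) K (τn n '' Icc 0 t) (Icc (τn n 0) (τn n t))
      hKcomp (hφn_cont n).continuousOn (hAsub.trans hBK) hBK isClosed_Icc
      (nonempty_Icc.2 hcd) (δ/2) (3*ε/4) hmodn happ
    have key2 := aux_inf_mono (φn n) K (τn n '' Icc 0 t) (Icc (τn n 0) (τn n t))
      hKcomp (hφn_cont n).continuousOn hBK hAsub
      ((nonempty_Icc.2 htIcc.1).image _)
    have him : (fun s => φn n (τn n s)) '' Icc 0 t = φn n '' (τn n '' Icc 0 t) :=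
      (image_image _ _ _).symm
    rw [him, max_eq_right hcd, abs_sub_lt_iff]
    constructor <;> linarith
  -- Part 2
  have P2 : ∀ Kc : Set ℝ, IsCompact Kc →
      TendstoUniformlyOn (fun n s => sInf (φn n '' Icc (τn n 0) (max (τn n 0) s)))
        (fun s => sInf (φ '' Icc (τ 0) (max (τ 0) s))) atTop Kc := by
    intro Kc hKc
    rw [Metric.tendstoUniformlyOn_iff]
    intro ε hε
    obtain ⟨R, hR⟩ := hKc.isBounded.subset_closedBall 0
    have hRic : Kc ⊆ Icc (-R) R := by
      rwa [Real.closedBall_eq_Icc, zero_sub, zero_add] at hR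
    set M : ℝ := max (τ 0 + 1) R with hM
    set K : Set ℝ := Icc 0 M with hK
    have hKcomp : IsCompact K := isCompact_Icc
    obtain ⟨δ, hδ, hmod0⟩ := Metric.uniformContinuousOn_iff.1
      (hKcomp.uniformContinuousOn_of_continuous hφ_cont.continuousOn) (ε/4) (by positivity)
    have hmodφ : ∀ x ∈ K, ∀ y ∈ K, |x - y| ≤ δ/2 → |φ x - φ y| ≤ ε/4 := by
      intro x hx y hy hxy
      have := hmod0 x hx y hy (by rw [Real.dist_eq]; linarith)
      rw [Real.dist_eq] at this; exact this.le
    have hE1 : ∀ᶠ n in atTop, |τn n 0 - τ 0| < min (δ/2) 1 := by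
      have := Metric.tendsto_nhds.1 ha (min (δ/2) 1) (lt_min (by positivity) one_pos)
      simpa [Real.dist_eq] using this
    have hE2 := Metric.tendstoUniformlyOn_iff.1 (hφ_unif K hKcomp) (ε/4) (by positivity)
    filter_upwards [hE1, hE2] with n h1 h3
    intro s hs
    have hsR : s ∈ Icc (-R) R := hRic hs
    have hc0 : 0 ≤ τn n 0 := hτn_nonneg n 0 h0T
    have hcb : τn n 0 ≤ τ 0 + 1 := by
      have := (abs_lt.1 h1).2
      have h2 := min_le_right (δ/2) (1:ℝ)
      linarith
    have hIn : Icc (τn n 0) (max (τn n 0) s) ⊆ K := by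
      intro r hr
      refine ⟨hc0.trans hr.1, hr.2.trans (max_le (hcb.trans (le_max_left _ _)) ?_)⟩
      exact hsR.2.trans (le_max_right _ _)
    have hI : Icc (τ 0) (max (τ 0) s) ⊆ K := by
      intro r hr
      refine ⟨ha0.trans hr.1, hr.2.trans (max_le ?_ (hsR.2.trans (le_max_right _ _)))⟩
      exact le_trans (by linarith) (le_max_left (τ 0 + 1) R)
    have hcc : |τn n 0 - τ 0| ≤ δ/2 := le_trans h1.le (min_le_left _ _)
    have hdd : |max (τn n 0) s - max (τ 0) s| ≤ δ/2 :=
      le_trans (abs_max_sub_max_le_abs _ _ _) hcc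
    have happ1 := aux_clamp (τn n 0) (max (τn n 0) s) (τ 0) (max (τ 0) s)
      (le_max_left _ _) (δ/2) hcc hdd
    have happ2 := aux_clamp (τ 0) (max (τ 0) s) (τn n 0) (max (τn n 0) s)
      (le_max_left _ _) (δ/2) (by rwa [abs_sub_comm] at hcc) (by rwa [abs_sub_comm] at hdd)
    have k1 := aux_inf_le_inf_add φ K (Icc (τn n 0) (max (τn n 0) s))
      (Icc (τ 0) (max (τ 0) s)) hKcomp hφ_cont.continuousOn hIn hI isClosed_Icc
      (nonempty_Icc.2 (le_max_left _ _)) (δ/2) (ε/4) hmodφ happ1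
    have k2 := aux_inf_le_inf_add φ K (Icc (τ 0) (max (τ 0) s))
      (Icc (τn n 0) (max (τn n 0) s)) hKcomp hφ_cont.continuousOn hI hIn isClosed_Icc
      (nonempty_Icc.2 (le_max_left _ _)) (δ/2) (ε/4) hmodφ happ2
    have stepi := aux_inf_fun_close (φn n) φ (Icc (τn n 0) (max (τn n 0) s))
      (nonempty_Icc.2 (le_max_left _ _))
      (isCompact_Icc.image (hφn_cont n)).bddBelow
      (isCompact_Icc.image hφ_cont).bddBelow (ε/4)
      (fun x hx => by
        have := h3 x (hIn hx)
        rw [Real.dist_eq, abs_sub_comm] at this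
        exact this.le)
    have A1 := abs_le.1 stepi
    rw [Real.dist_eq, abs_sub_lt_iff]
    constructor <;> linarith
  refine ⟨P1, P2, ?_⟩
  -- Part 3
  intro t ht hcase
  have hτt : Tendsto (fun n => τn n t) atTop (𝓝 (τ t)) := by
    rcases hcase with hcont | rfl
    · by_cases ht0 : t = 0
      · subst ht0; exact hconv 0 hS0
      by_cases htT : t = T
      · subst htT; exact hconv _ hST
      have htpos : 0 < t := lt_of_le_of_ne ht.1 (Ne.symm ht0)
      have htltT : t < T := lt_of_le_of_ne ht.2 htT
      rw [Metric.tendsto_atTop]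
      intro ε hε
      obtain ⟨η, hη, hηp⟩ := Metric.continuousWithinAt_iff.1 hcont (ε/2) (by positivity)
      set η₁ : ℝ := min (η/2) (min (t/2) ((T - t)/2)) with hη₁
      have hη₁pos : 0 < η₁ := lt_min (by positivity) (lt_min (by linarith) (by linarith))
      have hη₁t : η₁ ≤ t/2 := le_trans (min_le_right _ _) (min_le_left _ _)
      have hη₁T : η₁ ≤ (T - t)/2 := le_trans (min_le_right _ _) (min_le_right _ _)
      have hη₁η : η₁ ≤ η/2 := min_le_left _ _
      have hpIcc : t - η₁ ∈ Icc (0:ℝ) T := ⟨by linarith, by linarith⟩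
      have hqIcc : t + η₁ ∈ Icc (0:ℝ) T := ⟨by linarith, by linarith⟩
      obtain ⟨u, huS, hud⟩ := Metric.mem_closure_iff.1 (hS_dense hpIcc) η₁ hη₁pos
      obtain ⟨v, hvS, hvd⟩ := Metric.mem_closure_iff.1 (hS_dense hqIcc) η₁ hη₁pos
      rw [Real.dist_eq] at hud hvd
      have hud' := abs_lt.1 hud
      have hvd' := abs_lt.1 hvd
      have hu1 : u ≤ t := by linarith [hud'.1]
      have hv1 : t ≤ v := by linarith [hvd'.2]
      have huτ : |τ u - τ t| < ε/2 := by
        have := hηp (hS_sub huS) (by rw [Real.dist_eq]; rw [abs_lt]; constructor <;> linarith)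
        rwa [Real.dist_eq] at this
      have hvτ : |τ v - τ t| < ε/2 := by
        have := hηp (hS_sub hvS) (by rw [Real.dist_eq]; rw [abs_lt]; constructor <;> linarith)
        rwa [Real.dist_eq] at this
      obtain ⟨N1, hN1⟩ := Metric.tendsto_atTop.1 (hconv u huS) (ε/2) (by positivity)
      obtain ⟨N2, hN2⟩ := Metric.tendsto_atTop.1 (hconv v hvS) (ε/2) (by positivity)
      refine ⟨max N1 N2, fun n hn => ?_⟩
      have e1 := hN1 n (le_trans (le_max_left _ _) hn)
      have e2 := hN2 n (le_trans (le_max_right _ _) hn)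
      rw [Real.dist_eq] at e1 e2 ⊢
      have e1' := abs_lt.1 e1
      have e2' := abs_lt.1 e2
      have huτ' := abs_lt.1 huτ
      have hvτ' := abs_lt.1 hvτ
      have m1 : τn n u ≤ τn n t := hτn_mono n (hS_sub huS) ht hu1
      have m2 : τn n t ≤ τn n v := hτn_mono n ht (hS_sub hvS) hv1
      rw [abs_lt]
      constructor <;> linarith
    · exact hconv _ hST
  rw [Metric.tendsto_nhds]
  intro ε hε
  have hP1 := P1 (ε/3) (by positivity)
  have hP2 := Metric.tendstoUniformlyOn_iff.1
    (P2 (Icc (τ t - 1) (τ t + 1)) isCompact_Icc) (ε/3) (by positivity)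
  have hEin : ∀ᶠ n in atTop, τn n t ∈ Icc (τ t - 1) (τ t + 1) := by
    filter_upwards [Metric.tendsto_nhds.1 hτt 1 one_pos] with n h
    rw [Real.dist_eq] at h
    have := abs_lt.1 h
    exact ⟨by linarith [this.1], by linarith [this.2]⟩
  -- continuity of the limiting running infimum at τ t
  have hGc : ∃ δG > (0:ℝ), ∀ s : ℝ, |s - τ t| ≤ δG →
      |sInf (φ '' Icc (τ 0) (max (τ 0) s)) - sInf (φ '' Icc (τ 0) (max (τ 0) (τ t)))| ≤ ε/3 := by
    set M : ℝ := max (τ 0) (τ t) + 1 with hM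
    set K : Set ℝ := Icc 0 M with hK
    have hKcomp : IsCompact K := isCompact_Icc
    obtain ⟨δ, hδ, hmod0⟩ := Metric.uniformContinuousOn_iff.1
      (hKcomp.uniformContinuousOn_of_continuous hφ_cont.continuousOn) (ε/3) (by positivity)
    have hmodφ : ∀ x ∈ K, ∀ y ∈ K, |x - y| ≤ δ/2 → |φ x - φ y| ≤ ε/3 := by
      intro x hx y hy hxy
      have := hmod0 x hx y hy (by rw [Real.dist_eq]; linarith)
      rw [Real.dist_eq] at this; exact this.le
    refine ⟨min (δ/2) 1, lt_min (by positivity) one_pos, fun s hsd => ?_⟩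
    have hs1 : |s - τ t| ≤ 1 := hsd.trans (min_le_right _ _)
    have hs2 : |s - τ t| ≤ δ/2 := hsd.trans (min_le_left _ _)
    have hI : Icc (τ 0) (max (τ 0) (τ t)) ⊆ K := by
      intro r hr
      refine ⟨ha0.trans hr.1, hr.2.trans ?_⟩
      rw [hM]; linarith [le_refl (max (τ 0) (τ t))]
    have hIs : Icc (τ 0) (max (τ 0) s) ⊆ K := by
      intro r hr
      refine ⟨ha0.trans hr.1, hr.2.trans (max_le ?_ ?_)⟩
      · rw [hM]; linarith [le_max_left (τ 0) (τ t)]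
      · rw [hM]
        have := (abs_le.1 hs1).2
        linarith [le_max_right (τ 0) (τ t)]
    have hdd : |max (τ 0) s - max (τ 0) (τ t)| ≤ δ/2 := by
      rw [max_comm (τ 0) s, max_comm (τ 0) (τ t)]
      exact le_trans (abs_max_sub_max_le_abs _ _ _) hs2
    have happ1 := aux_clamp (τ 0) (max (τ 0) s) (τ 0) (max (τ 0) (τ t))
      (le_max_left _ _) (δ/2) (by simp; positivity) hdd
    have happ2 := aux_clamp (τ 0) (max (τ 0) (τ t)) (τ 0) (max (τ 0) s)
      (le_max_left _ _) (δ/2) (by simp; positivity) (by rwa [abs_sub_comm] at hdd)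
    have k1 := aux_inf_le_inf_add φ K (Icc (τ 0) (max (τ 0) s))
      (Icc (τ 0) (max (τ 0) (τ t))) hKcomp hφ_cont.continuousOn hIs hI isClosed_Icc
      (nonempty_Icc.2 (le_max_left _ _)) (δ/2) (ε/3) hmodφ happ1
    have k2 := aux_inf_le_inf_add φ K (Icc (τ 0) (max (τ 0) (τ t)))
      (Icc (τ 0) (max (τ 0) s)) hKcomp hφ_cont.continuousOn hI hIs isClosed_Icc
      (nonempty_Icc.2 (le_max_left _ _)) (δ/2) (ε/3) hmodφ happ2
    rw [abs_le]
    constructor <;> linarith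
  obtain ⟨δG, hδG, hGc⟩ := hGc
  have hEG : ∀ᶠ n in atTop, |τn n t - τ t| ≤ δG := by
    filter_upwards [Metric.tendsto_nhds.1 hτt δG hδG] with n h
    rw [Real.dist_eq] at h; exact h.le
  filter_upwards [hP1, hP2, hEin, hEG] with n h1 h2 h3 h4
  have b1 := h1 t ht
  have b2 := h2 (τn n t) h3
  have b3 := hGc (τn n t) h4
  simp only [Real.dist_eq] at b2 ⊢
  have c1 := abs_lt.1 b1
  have c2 := abs_lt.1 b2
  have c3 := abs_le.1 b3
  rw [abs_lt]
  constructor <;> linarith [c1.1, c1.2, c2.1, c2.2, c3.1, c3.2]
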